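/- Consider a POMDP with nonempty finite state, observation and action sets S, O, A, transition kernel α, observation kernel β, discount factor γ ∈ (0,1) and initial distribution μ ∈ Δ_S. Fix a policy π₀ ∈ Δ_A^O and a subset O' ⊆ O, let Π = {π ∈ Δ_A^O : π(·|o) = π₀(·|o) for all o ∉ O'} and let S_{O'} = {s ∈ S : β(o|s) > 0 for some o ∈ O'}. Then there exist multivariate polynomials q and (q_s)_{s∈S} in the variables {π(a|o) : o ∈ O', a ∈ A}, each of total degree at most |S_{O'}|, such that for every π ∈ Π: q(π) = det(I − γ·p_πᵀ), q_s(π) = det of the matrix obtained from I − γ·p_πᵀ by replacing its s-th column by μ, and the discounted state distribution satisfies ρ_γ^{π,μ}(s)·q(π) = (1−γ)·q_s(π) for every s ∈ S. In particular, restricted to Π, each ρ_γ^{π,μ}(s) is a rational function of the entries of π of degree at most |S_{O'}|. -/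

import Mathlib

open Matrix MvPolynomial

lemma det_deg_le {S : Type*} [Fintype S] [DecidableEq S] {σ : Type*}
    (N : Matrix S S (MvPolynomial σ ℝ)) (d : S → ℕ)
    (h : ∀ i j, (N i j).totalDegree ≤ d j) :
    N.det.totalDegree ≤ ∑ j, d j := by
  rw [Matrix.det_apply']
  refine (MvPolynomial.totalDegree_finset_sum _ _).trans (Finset.sup_le fun σ' _ => ?_)
  refine (MvPolynomial.totalDegree_mul _ _).trans ?_
  have h1 : (((Equiv.Perm.sign σ' : ℤ) : MvPolynomial σ ℝ)).totalDegree = 0 := by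
    rcases Int.units_eq_one_or (Equiv.Perm.sign σ') with h | h <;> simp [h]
  rw [h1, zero_add]
  exact (MvPolynomial.totalDegree_finset_prod _ _).trans
    (Finset.sum_le_sum fun i _ => h (σ' i) i)

/-- For a POMDP with finite nonempty state, observation and action spaces
`S, O, A`, transition kernel `α`, observation kernel `β`, discount `γ ∈ (0,1)` and initial
distribution `μ`, fix a policy `π₀` and a subset `O' ⊆ O`. There exist multivariate
polynomials `q` and `(qs s)_{s ∈ S}` in the variables `{π(a|o) : o ∈ O', a ∈ A}`, each of
total degree at most `|S_{O'}|` where `S_{O'} = {s : β(o|s) > 0 for some o ∈ O'}`, such that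
for every policy `π` agreeing with `π₀` outside `O'`: `q(π) = det(I - γ pπᵀ)`,
`qs s (π) = det` of `I - γ pπᵀ` with its `s`-th column replaced by `μ`, and the discounted
state distribution `ρ = (1-γ)(I - γ pπᵀ)⁻¹ μ` satisfies `ρ(s) · q(π) = (1-γ) · qs s (π)`. -/
theorem stmt5 {S O A : Type*} [Fintype S] [Fintype O] [Fintype A]
    [DecidableEq S] [Nonempty S] [Nonempty O] [Nonempty A]
    (α : S → A → S → ℝ) (hα : ∀ s a, (∀ s', 0 ≤ α s a s') ∧ ∑ s', α s a s' = 1)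
    (β : S → O → ℝ) (hβ : ∀ s, (∀ o, 0 ≤ β s o) ∧ ∑ o, β s o = 1)
    (γ : ℝ) (hγ : γ ∈ Set.Ioo (0 : ℝ) 1)
    (μ : S → ℝ) (hμ : (∀ s, 0 ≤ μ s) ∧ ∑ s, μ s = 1)
    (π₀ : O → A → ℝ) (hπ₀ : ∀ o, (∀ a, 0 ≤ π₀ o a) ∧ ∑ a, π₀ o a = 1)
    (O' : Set O) :
    ∃ (q : MvPolynomial (O' × A) ℝ) (qs : S → MvPolynomial (O' × A) ℝ),
      q.totalDegree ≤ Nat.card {s : S // ∃ o ∈ O', 0 < β s o} ∧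
      (∀ s, (qs s).totalDegree ≤ Nat.card {s : S // ∃ o ∈ O', 0 < β s o}) ∧
      ∀ π : O → A → ℝ,
        (∀ o, (∀ a, 0 ≤ π o a) ∧ ∑ a, π o a = 1) →
        (∀ o ∉ O', π o = π₀ o) →
        let pπ : Matrix S S ℝ := Matrix.of fun s s' => ∑ a, (∑ o, β s o * π o a) * α s a s'
        let ρ : S → ℝ := (1 - γ) • ((1 - γ • pπᵀ)⁻¹).mulVec μ
        MvPolynomial.eval (fun v => π v.1.1 v.2) q = (1 - γ • pπᵀ).det ∧
        (∀ s : S, MvPolynomial.eval (fun v => π v.1.1 v.2) (qs s)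
            = ((1 - γ • pπᵀ).updateCol s μ).det) ∧
        (∀ s : S, ρ s * MvPolynomial.eval (fun v => π v.1.1 v.2) q
            = (1 - γ) * MvPolynomial.eval (fun v => π v.1.1 v.2) (qs s)) := by
  classical
  obtain ⟨hγ0, hγ1⟩ := hγ
  set d : S → ℕ := fun s => if ∃ o ∈ O', 0 < β s o then 1 else 0 with hd
  set τp : S → A → MvPolynomial (O' × A) ℝ := fun s a =>
    C (∑ o ∈ Finset.univ.filter (· ∉ O'), β s o * π₀ o a)
      + ∑ o : O', C (β s o.1) * X (o, a) with hτp
  set P : Matrix S S (MvPolynomial (O' × A) ℝ) :=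
    Matrix.of fun s s' => ∑ a, τp s a * C (α s a s') with hP
  set M : Matrix S S (MvPolynomial (O' × A) ℝ) :=
    1 - (C γ : MvPolynomial (O' × A) ℝ) • Pᵀ with hM
  have hτdeg : ∀ s a, (τp s a).totalDegree ≤ d s := by
    intro s a
    by_cases hs : ∃ o ∈ O', 0 < β s o
    · have : d s = 1 := if_pos hs
      rw [this]; simp only [hτp]
      refine (MvPolynomial.totalDegree_add _ _).trans ?_
      refine max_le ?_ ?_
      · rw [MvPolynomial.totalDegree_C]; exact Nat.zero_le 1
      · refine (MvPolynomial.totalDegree_finset_sum _ _).trans (Finset.sup_le fun o _ => ?_)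
        refine (MvPolynomial.totalDegree_mul _ _).trans ?_
        simp [MvPolynomial.totalDegree_C, MvPolynomial.totalDegree_X]
    · have hz : ∀ o : O', β s o.1 = 0 := by
        intro o
        by_contra h0
        exact hs ⟨o.1, o.2, lt_of_le_of_ne ((hβ s).1 o.1) (Ne.symm h0)⟩
      have : d s = 0 := if_neg hs
      rw [this]; simp only [hτp]
      have : (∑ o : O', C (β s o.1) * X ((o : O') , a) : MvPolynomial (O' × A) ℝ) = 0 := by
        refine Finset.sum_eq_zero fun o _ => ?_
        rw [hz o, map_zero, zero_mul]
      rw [this, add_zero, MvPolynomial.totalDegree_C]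
  have hMdeg : ∀ i j, (M i j).totalDegree ≤ d j := by
    intro i j
    rw [hM]
    simp only [Matrix.sub_apply, Matrix.one_apply, Matrix.smul_apply, Matrix.transpose_apply]
    refine (MvPolynomial.totalDegree_sub _ _).trans ?_
    refine max_le ?_ ?_
    · split <;> simp
    · rw [hP]
      rw [smul_eq_mul]
      refine (MvPolynomial.totalDegree_mul _ _).trans ?_
      rw [MvPolynomial.totalDegree_C, zero_add]
      refine (MvPolynomial.totalDegree_finset_sum _ _).trans (Finset.sup_le fun a _ => ?_)
      refine (MvPolynomial.totalDegree_mul _ _).trans ?_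
      rw [MvPolynomial.totalDegree_C, add_zero]
      exact hτdeg j a
  have hcard : ∑ j, d j = Nat.card {s : S // ∃ o ∈ O', 0 < β s o} := by
    rw [Nat.card_eq_fintype_card, Fintype.card_subtype, Finset.card_filter]
  refine ⟨M.det, fun s => (M.updateCol s fun i => C (μ i)).det, ?_, ?_, ?_⟩
  · rw [← hcard]; exact det_deg_le M d hMdeg
  · intro s
    rw [← hcard]
    refine det_deg_le _ d fun i j => ?_
    by_cases hjs : j = s
    · subst hjs
      rw [Matrix.updateCol_apply, if_pos rfl, MvPolynomial.totalDegree_C]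
      exact Nat.zero_le _
    · rw [Matrix.updateCol_apply, if_neg hjs]
      exact hMdeg i j
  · intro π hπ hπ' pπ ρ
    set vals : O' × A → ℝ := fun v => π v.1.1 v.2 with hvals
    have hτev : ∀ s a, MvPolynomial.eval vals (τp s a) = ∑ o, β s o * π o a := by
      intro s a
      have e1 : MvPolynomial.eval vals (τp s a)
          = (∑ o ∈ Finset.univ.filter (· ∉ O'), β s o * π₀ o a)
            + ∑ o : O', β s o.1 * π o.1 a := by
        simp only [hτp, map_add, map_sum, _root_.map_mul, eval_C, eval_X, hvals]
      have h2 : (∑ o ∈ Finset.univ.filter (· ∉ O'), β s o * π₀ o a)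
          = ∑ o ∈ Finset.univ.filter (· ∉ O'), β s o * π o a := by
        refine Finset.sum_congr rfl fun o ho => ?_
        rw [hπ' o (by simpa using ho)]
      have h1 : (∑ o : O', β s o.1 * π o.1 a)
          = ∑ o ∈ Finset.univ.filter (· ∈ O'), β s o * π o a :=
        (Finset.sum_subtype (p := (· ∈ O')) (Finset.univ.filter (· ∈ O'))
          (fun x => by simp) (fun o => β s o * π o a)).symm
      rw [e1, h2, h1, add_comm, Finset.sum_filter_add_sum_filter_not]
    have hPev : ∀ s s', MvPolynomial.eval vals (P s s') = pπ s s' := by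
      intro s s'
      have e0 : P s s' = ∑ a, τp s a * C (α s a s') := rfl
      rw [e0, map_sum]
      show _ = ∑ a, (∑ o, β s o * π o a) * α s a s'
      refine Finset.sum_congr rfl fun a _ => ?_
      rw [_root_.map_mul, eval_C, hτev]
    have hMev : M.map (MvPolynomial.eval vals) = 1 - γ • pπᵀ := by
      ext i j
      have e0 : M i j = (if i = j then 1 else 0) - C γ * P j i := by
        simp [hM, Matrix.sub_apply, Matrix.smul_apply, Matrix.transpose_apply,
          Matrix.one_apply, smul_eq_mul]
      rw [Matrix.map_apply, e0, map_sub, _root_.map_mul, eval_C, hPev]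
      by_cases hij : i = j <;>
        simp [hij, Matrix.sub_apply, Matrix.smul_apply, Matrix.transpose_apply,
          Matrix.one_apply, smul_eq_mul]
    have hq : MvPolynomial.eval vals M.det = (1 - γ • pπᵀ).det := by
      rw [RingHom.map_det, RingHom.mapMatrix_apply, hMev]
    have hqs : ∀ s, MvPolynomial.eval vals (M.updateCol s fun i => C (μ i)).det
        = ((1 - γ • pπᵀ).updateCol s μ).det := by
      intro s
      rw [RingHom.map_det, RingHom.mapMatrix_apply]
      congr 1
      ext i j
      have e1 : MvPolynomial.eval vals (M i j) = (1 - γ • pπᵀ) i j := by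
        have := congrFun (congrFun hMev i) j
        simpa [Matrix.map_apply] using this
      by_cases hjs : j = s
      · subst hjs
        simp [Matrix.map_apply, Matrix.updateCol_apply]
      · simp [Matrix.map_apply, Matrix.updateCol_apply, hjs, e1]
    refine ⟨hq, hqs, ?_⟩
    have hnn : ∀ s s', 0 ≤ pπ s s' := by
      intro s s'
      refine Finset.sum_nonneg fun a _ => mul_nonneg ?_ ((hα s a).1 s')
      exact Finset.sum_nonneg fun o _ => mul_nonneg ((hβ s).1 o) ((hπ o).1 a)
    have hrow : ∀ s, ∑ s', pπ s s' = 1 := by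
      intro s
      show (∑ s', ∑ a, (∑ o, β s o * π o a) * α s a s') = 1
      rw [Finset.sum_comm]
      calc (∑ a, ∑ s', (∑ o, β s o * π o a) * α s a s')
          = ∑ a, ∑ o, β s o * π o a := by
            refine Finset.sum_congr rfl fun a _ => ?_
            rw [← Finset.mul_sum, (hα s a).2, mul_one]
        _ = ∑ o, β s o := by
            rw [Finset.sum_comm]
            refine Finset.sum_congr rfl fun o _ => ?_
            rw [← Finset.mul_sum, (hπ o).2, mul_one]
        _ = 1 := (hβ s).2
    have hdiag : ∀ s, pπ s s ≤ 1 := by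
      intro s
      rw [← hrow s]
      exact Finset.single_le_sum (fun s' _ => hnn s s') (Finset.mem_univ s)
    have hdet : (1 - γ • pπᵀ).det ≠ 0 := by
      refine det_ne_zero_of_sum_col_lt_diag fun k => ?_
      have hcol : ∀ i, (1 - γ • pπᵀ) i k = (if i = k then (1:ℝ) else 0) - γ * pπ k i := by
        intro i
        simp [Matrix.sub_apply, Matrix.smul_apply, Matrix.transpose_apply,
          Matrix.one_apply, smul_eq_mul]
      have h1 : ∑ i ∈ Finset.univ.erase k, ‖(1 - γ • pπᵀ) i k‖
          = γ * (1 - pπ k k) := by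
        have e : ∀ i ∈ Finset.univ.erase k, ‖(1 - γ • pπᵀ) i k‖ = γ * pπ k i := by
          intro i hi
          have hik : i ≠ k := Finset.ne_of_mem_erase hi
          rw [hcol i, if_neg hik, zero_sub, norm_neg, Real.norm_eq_abs,
            abs_of_nonneg (mul_nonneg hγ0.le (hnn k i))]
        rw [Finset.sum_congr rfl e, ← Finset.mul_sum,
          Finset.sum_erase_eq_sub (Finset.mem_univ k), hrow k]
      have h2 : ‖(1 - γ • pπᵀ) k k‖ = 1 - γ * pπ k k := by
        rw [hcol k, if_pos rfl, Real.norm_eq_abs, abs_of_nonneg]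
        nlinarith [hnn k k, hdiag k]
      rw [h1, h2]
      nlinarith [hnn k k, hdiag k]
    have hU : IsUnit (1 - γ • pπᵀ).det := isUnit_iff_ne_zero.mpr hdet
    have hcr := Matrix.det_smul_inv_mulVec_eq_cramer (1 - γ • pπᵀ) μ hU
    intro s
    rw [hq, hqs s]
    have h3 := congrFun hcr s
    simp only [Pi.smul_apply, smul_eq_mul, Matrix.cramer_apply] at h3
    have hρ : ρ s = (1 - γ) * ((1 - γ • pπᵀ)⁻¹ *ᵥ μ) s := rfl
    rw [hρ, mul_assoc, mul_comm (((1 - γ • pπᵀ)⁻¹ *ᵥ μ) s), h3]
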